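/- Let Γ be a finite connected directed multigraph with a balanced weight w: E → ℤ, meaning that at each vertex v the sum of the weights of edges pointing into v equals the sum of the weights of edges pointing out of v. Then the weighted number of oriented spanning trees is independent of the choice of root: N(Γ, w, v_i) = N(Γ, w, v_j) for all vertices v_i, v_j of Γ. -/

import Mathlib

/-- A finite directed multigraph on vertex type `V` with edge type `E`. -/
structure Multidigraph (V E : Type) where
  src : E → V
  tgt : E → V

/-- `T` is an oriented spanning tree of `G` rooted at `r`: every vertex `v ≠ r`
has in-degree 1 in `T`, the root `r` has in-degree 0 in `T`, and `T` contains
no oriented cycle. -/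
def IsOrientedSpanningTree {V E : Type} [Fintype E] [DecidableEq V]
    (G : Multidigraph V E) (r : V) (T : Finset E) : Prop :=
  (∀ v : V, v ≠ r → (T.filter (fun e => G.tgt e = v)).card = 1) ∧
  (T.filter (fun e => G.tgt e = r)).card = 0 ∧
  ¬ ∃ l : List E, l ≠ [] ∧ (∀ e ∈ l, e ∈ T) ∧
      l.Chain' (fun e f => G.tgt e = G.src f) ∧
      ∀ e₁ ∈ l.head?, ∀ e₂ ∈ l.getLast?, G.tgt e₂ = G.src e₁

open Classical in
/-- The weighted number `N(Γ, w, r)` of oriented spanning trees rooted at `r`. -/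
noncomputable def treeCount {V E : Type} [Fintype E] [DecidableEq V]
    (G : Multidigraph V E) (w : E → ℤ) (r : V) : ℤ :=
  ∑ T : Finset E, if IsOrientedSpanningTree G r T then ∏ e ∈ T, w e else 0


/-- Undirected connectivity of the underlying undirected graph. -/
def MConnected {V E : Type} (G : Multidigraph V E) : Prop :=
  ∀ u v : V, Relation.ReflTransGen
    (fun x y => ∃ e : E, (G.src e = x ∧ G.tgt e = y) ∨ (G.src e = y ∧ G.tgt e = x)) u v

/-- A weight is balanced if at each vertex the incoming and outgoing weights agree. -/
def IsBalanced {V E : Type} [Fintype E] [DecidableEq V]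
    (G : Multidigraph V E) (w : E → ℤ) : Prop :=
  ∀ v : V, ∑ e ∈ Finset.univ.filter (fun e => G.tgt e = v), w e
         = ∑ e ∈ Finset.univ.filter (fun e => G.src e = v), w e

set_option linter.unusedSectionVars false

namespace RootInd

open Matrix Finset Function

variable {V E : Type} [Fintype V] [DecidableEq V] [Fintype E]


lemma det_eq_zero_of_row_sums [Nonempty V] (M : Matrix V V ℤ)
    (h : ∀ v, ∑ u, M v u = 0) : M.det = 0 := by
  rw [← Matrix.exists_mulVec_eq_zero_iff]
  refine ⟨fun _ => 1, ?_, ?_⟩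
  · intro hc
    have := congrFun hc (Classical.arbitrary V)
    simp at this
  · ext v
    simpa [Matrix.mulVec, dotProduct] using h v

lemma det_eq_zero_of_col_sums [Nonempty V] (M : Matrix V V ℤ)
    (h : ∀ u, ∑ v, M v u = 0) : M.det = 0 := by
  rw [← Matrix.det_transpose]
  exact det_eq_zero_of_row_sums _ (by simpa [Matrix.transpose_apply] using h)

lemma det_updateCol_single (N : Matrix V V ℤ) (i j : V)
    (hrow : N i = Pi.single j 1) :
    (N.updateCol j (Pi.single i 1)).det = N.det := by
  classical
  set c : V → ℤ := fun v => if v = i then 0 else N v j with hc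
  have key : ∀ v u, (Matrix.replicateCol Unit (-c) * Matrix.replicateRow Unit (Pi.single i (1:ℤ)) * N) v u
      = -(c v) * N i u := by
    intro v u
    rw [Matrix.mul_apply]
    simp [Matrix.mul_apply, Pi.single_apply, mul_ite, ite_mul]
  have hE : (1 + Matrix.replicateCol Unit (-c) * Matrix.replicateRow Unit (Pi.single i (1:ℤ))) * N
      = N.updateCol j (Pi.single i 1) := by
    ext v u
    rw [Matrix.add_mul, Matrix.one_mul, Matrix.add_apply, key, Matrix.updateCol_apply]
    have h1 : N i j = 1 := by rw [hrow]; simp [Pi.single_apply]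
    by_cases hu : u = j
    · rw [if_pos hu, hu, h1, mul_one]
      by_cases hv : v = i
      · rw [hv]; simp [hc, h1, Pi.single_apply]
      · simp [hc, hv, Pi.single_apply]
    · have h0 : N i u = 0 := by rw [hrow]; simp [Pi.single_apply, hu]
      simp [hu, h0]
  rw [← hE, Matrix.det_mul, Matrix.det_one_add_replicateCol_mul_replicateRow]
  have : (Pi.single i (1:ℤ)) ⬝ᵥ (-c) = 0 := by
    simp only [dotProduct, Pi.single_apply, hc, Pi.neg_apply, ite_mul, one_mul, zero_mul]
    apply Finset.sum_eq_zero
    intro x _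
    by_cases hx : x = i <;> simp [hx]
  rw [this, add_zero, one_mul]

lemma det_updateRow_single (N : Matrix V V ℤ) (i j : V)
    (hcol : (fun v => N v j) = Pi.single i 1) :
    (N.updateRow i (Pi.single j 1)).det = N.det := by
  rw [← Matrix.det_transpose, ← Matrix.det_transpose N, ← Matrix.updateCol_transpose]
  exact det_updateCol_single Nᵀ j i hcol

lemma sum_single_sub (b b' : V) : ∑ u, ((Pi.single b 1 - Pi.single b' 1 : V → ℤ)) u = 0 := by
  simp [Pi.sub_apply, Finset.sum_sub_distrib, Pi.single_apply]

lemma principal_cofactor_eq [Nonempty V] (B : Matrix V V ℤ)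
    (hrow : ∀ v, ∑ u, B v u = 0) (hcol : ∀ u, ∑ v, B v u = 0) (i j : V) :
    ((B.updateRow i (Pi.single i 1)).updateCol i (Pi.single i 1)).det =
    ((B.updateRow j (Pi.single j 1)).updateCol j (Pi.single j 1)).det := by
  classical
  have h1 : ∀ a b : V,
      ((B.updateRow a (Pi.single b 1)).updateCol b (Pi.single a 1)).det
      = (B.updateRow a (Pi.single b 1)).det := by
    intro a b
    exact det_updateCol_single _ a b (Matrix.updateRow_self)
  have h2 : ∀ a b b' : V, (B.updateRow a (Pi.single b 1)).det
      = (B.updateRow a (Pi.single b' 1)).det := by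
    intro a b b'
    have hsplit : (Pi.single b (1:ℤ) : V → ℤ)
        = (Pi.single b 1 - Pi.single b' 1) + Pi.single b' 1 := by
      rw [sub_add_cancel]
    rw [hsplit, Matrix.det_updateRow_add]
    have hz : (B.updateRow a (Pi.single b 1 - Pi.single b' 1)).det = 0 := by
      apply det_eq_zero_of_row_sums
      intro v
      by_cases hv : v = a
      · rw [hv]
        simp only [Matrix.updateRow_self]
        exact sum_single_sub b b'
      · simp only [Matrix.updateRow_ne hv]
        exact hrow v
    rw [hz, zero_add]
  have h2' : ∀ a a' b : V, (B.updateCol b (Pi.single a 1)).det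
      = (B.updateCol b (Pi.single a' 1)).det := by
    intro a a' b
    have hsplit : (Pi.single a (1:ℤ) : V → ℤ)
        = (Pi.single a 1 - Pi.single a' 1) + Pi.single a' 1 := by
      rw [sub_add_cancel]
    rw [hsplit, Matrix.det_updateCol_add]
    have hz : (B.updateCol b (Pi.single a 1 - Pi.single a' 1)).det = 0 := by
      apply det_eq_zero_of_col_sums
      intro u
      by_cases hu : u = b
      · rw [hu]
        simp only [Matrix.updateCol_self]
        exact sum_single_sub a a'
      · have : ∀ v, (B.updateCol b (Pi.single a 1 - Pi.single a' 1)) v u = B v u := by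
          intro v; rw [Matrix.updateCol_ne hu]
        rw [Finset.sum_congr rfl (fun v _ => this v)]
        exact hcol u
    rw [hz, zero_add]
  have h3 : ∀ a b : V, (B.updateRow a (Pi.single b 1)).det
      = (B.updateCol b (Pi.single a 1)).det := by
    intro a b
    rw [← h1 a b]
    have h1' : ((B.updateCol b (Pi.single a 1)).updateRow a (Pi.single b 1)).det
        = (B.updateCol b (Pi.single a 1)).det := by
      apply det_updateRow_single _ a b
      funext v
      rw [Matrix.updateCol_self]
    rw [← h1']
    congr 1
    ext v u
    by_cases hu : u = b <;> by_cases hv : v = a <;>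
      simp [Matrix.updateCol_apply, Matrix.updateRow_apply, hu, hv, Pi.single_apply]
  calc ((B.updateRow i (Pi.single i 1)).updateCol i (Pi.single i 1)).det
      = (B.updateRow i (Pi.single i 1)).det := h1 i i
    _ = (B.updateRow i (Pi.single j 1)).det := h2 i i j
    _ = (B.updateCol j (Pi.single i 1)).det := h3 i j
    _ = (B.updateCol j (Pi.single j 1)).det := h2' i j j
    _ = (B.updateRow j (Pi.single j 1)).det := (h3 j j).symm
    _ = ((B.updateRow j (Pi.single j 1)).updateCol j (Pi.single j 1)).det := (h1 j j).symm



def inc (G : Multidigraph V E) (e : E) : V → ℤ :=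
  fun u => (if u = G.tgt e then 1 else 0) - (if u = G.src e then 1 else 0)

def inc' (G : Multidigraph V E) (r : V) (e : E) : V → ℤ :=
  fun u => if u = r then 0 else inc G e u

def coef (G : Multidigraph V E) (w : E → ℤ) (v : V) (e : E) : ℤ :=
  if G.tgt e = v then w e else 0

def Bmat (G : Multidigraph V E) (w : E → ℤ) : Matrix V V ℤ :=
  Matrix.of fun v u => ∑ e : E, coef G w v e * inc G e u

def hstep (G : Multidigraph V E) (r : V) (p : V → E) : V → V :=
  fun x => if x = r then r else G.src (p x)

def Valid (G : Multidigraph V E) (r : V) (p : V → E) : Prop :=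
  ∀ v, v ≠ r → G.tgt (p v) = v

def Acyc (G : Multidigraph V E) (r : V) (p : V → E) : Prop :=
  ∀ v, ∃ k, (hstep G r p)^[k] v = r

def Nmat (G : Multidigraph V E) (r : V) (p : V → E) : Matrix V V ℤ :=
  Matrix.of fun v => if v = r then Pi.single r 1 else inc' G r (p v)

lemma sum_inc (G : Multidigraph V E) (e : E) : ∑ u, inc G e u = 0 := by
  simp [inc, Finset.sum_sub_distrib, Finset.sum_ite_eq']

lemma Bmat_rowsum (G : Multidigraph V E) (w : E → ℤ) (v : V) :
    ∑ u, Bmat G w v u = 0 := by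
  rw [show ∑ u, Bmat G w v u = ∑ u, ∑ e : E, coef G w v e * inc G e u from rfl,
    Finset.sum_comm]
  apply Finset.sum_eq_zero
  intro e _
  rw [← Finset.mul_sum, sum_inc, mul_zero]

lemma Bmat_colsum (G : Multidigraph V E) (w : E → ℤ)
    (hbal : ∀ v : V, ∑ e ∈ Finset.univ.filter (fun e => G.tgt e = v), w e
         = ∑ e ∈ Finset.univ.filter (fun e => G.src e = v), w e) (u : V) :
    ∑ v, Bmat G w v u = 0 := by
  rw [show ∑ v, Bmat G w v u = ∑ v, ∑ e : E, coef G w v e * inc G e u from rfl,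
    Finset.sum_comm]
  have step : ∀ e : E, ∑ v, coef G w v e * inc G e u
      = (if G.tgt e = u then w e else 0) - (if G.src e = u then w e else 0) := by
    intro e
    have : ∀ v, coef G w v e * inc G e u
        = if G.tgt e = v then w e * inc G e u else 0 := by
      intro v; rw [coef]; by_cases h : G.tgt e = v <;> simp [h]
    rw [Finset.sum_congr rfl (fun v _ => this v), Finset.sum_ite_eq]
    simp only [Finset.mem_univ, if_true, inc]
    rw [mul_sub]
    congr 1
    · by_cases h : G.tgt e = u
      · rw [if_pos h.symm, if_pos h, mul_one]
      · rw [if_neg (fun hh => h hh.symm), if_neg h, mul_zero]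
    · by_cases h : G.src e = u
      · rw [if_pos h.symm, if_pos h, mul_one]
      · rw [if_neg (fun hh => h hh.symm), if_neg h, mul_zero]
  rw [Finset.sum_congr rfl (fun e _ => step e), Finset.sum_sub_distrib,
    ← Finset.sum_filter, ← Finset.sum_filter, hbal u, sub_self]

lemma Nmat_apply_ne (G : Multidigraph V E) (r : V) (p : V → E)
    (hval : Valid G r p) {v : V} (hv : v ≠ r) (u : V) :
    Nmat G r p v u = if u = r then 0 else
      ((if u = v then 1 else 0) - (if u = hstep G r p v then 1 else 0)) := by
  simp only [Nmat, Matrix.of_apply, if_neg hv, inc', inc, hval v hv, hstep]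

lemma det_Nmat_acyc (G : Multidigraph V E) (r : V) (p : V → E)
    (hval : Valid G r p) (hacyc : Acyc G r p) : (Nmat G r p).det = 1 := by
  classical
  set h : V → V := hstep G r p with hh
  set b : V → ℕ := fun v => Nat.find (hacyc v) with hb
  have bspec : ∀ v, h^[b v] v = r := fun v => Nat.find_spec (hacyc v)
  have hbr : b r = 0 := by
    rw [hb, Nat.find_eq_zero]
    rfl
  have hstep_lt : ∀ v, v ≠ r → b (h v) < b v := by
    intro v hv
    have h0 : b v ≠ 0 := by
      intro h0
      have := bspec v
      rw [h0, Function.iterate_zero_apply] at this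
      exact hv this
    obtain ⟨k, hk⟩ := Nat.exists_eq_succ_of_ne_zero h0
    have hit : h^[k] (h v) = r := by
      have := bspec v
      rw [hk, Function.iterate_succ_apply] at this
      exact this
    have : b (h v) ≤ k := Nat.find_le hit
    omega
  have hbt : ((Nmat G r p)ᵀ).BlockTriangular b := by
    intro x y hxy
    rw [Matrix.transpose_apply]
    by_cases hy : y = r
    · have hx : x ≠ r := by
        intro hxr
        rw [hxr, hy, lt_self_iff_false] at hxy
        exact hxy
      rw [hy]
      simp only [Nmat, Matrix.of_apply, if_pos rfl]
      exact Pi.single_eq_of_ne hx 1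
    · rw [Nmat_apply_ne G r p hval hy]
      by_cases hx : x = r
      · rw [if_pos hx]
      · rw [if_neg hx]
        have h1 : x ≠ y := fun hh => by rw [hh, lt_self_iff_false] at hxy; exact hxy
        have h2 : x ≠ h y := by
          intro hh
          have := hstep_lt y hy
          rw [← hh] at this
          omega
        rw [if_neg h1, if_neg h2, sub_zero]
  rw [← Matrix.det_transpose, hbt.det]
  apply Finset.prod_eq_one
  intro k _
  have hblock : ((Nmat G r p)ᵀ).toSquareBlock b k = 1 := by
    ext ⟨x, hx⟩ ⟨y, hy⟩
    rw [Matrix.toSquareBlock_def]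
    simp only [Matrix.of_apply, Matrix.transpose_apply, Matrix.one_apply, Subtype.mk.injEq]
    by_cases hxy : x = y
    · rw [if_pos hxy, ← hxy]
      by_cases hxr : x = r
      · rw [hxr]
        simp [Nmat, Pi.single_eq_same]
      · rw [Nmat_apply_ne G r p hval hxr, if_neg hxr, if_pos rfl]
        have : x ≠ h x := by
          intro hcon
          have := hstep_lt x hxr
          rw [← hcon, lt_self_iff_false] at this
          exact this
        rw [if_neg this, sub_zero]
    · rw [if_neg hxy]
      by_cases hyr : y = r
      · have hxr : x ≠ r := fun hc => hxy (hc.trans hyr.symm)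
        rw [hyr]
        simp only [Nmat, Matrix.of_apply, if_pos rfl]
        exact Pi.single_eq_of_ne hxr 1
      · rw [Nmat_apply_ne G r p hval hyr]
        by_cases hxr : x = r
        · rw [if_pos hxr]
        · rw [if_neg hxr]
          have h2 : x ≠ h y := by
            intro hcon
            have := hstep_lt y hyr
            rw [← hcon, hx, hy, lt_self_iff_false] at this
            exact this
          rw [if_neg hxy, if_neg h2, sub_zero]
  rw [hblock, Matrix.det_one]

lemma det_Nmat_cyc (G : Multidigraph V E) (r : V) (p : V → E)
    (hval : Valid G r p) (hnac : ¬ Acyc G r p) : (Nmat G r p).det = 0 := by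
  classical
  set h : V → V := hstep G r p with hh
  rw [Acyc] at hnac
  push_neg at hnac
  obtain ⟨v₀, hv₀⟩ := hnac
  obtain ⟨y, m, hm, hym, hyr⟩ : ∃ (y : V) (m : ℕ), 0 < m ∧ h^[m] y = y ∧
      ∀ k, h^[k] y ≠ r := by
    obtain ⟨i, j, hij, hmap⟩ :=
      Finite.exists_ne_map_eq_of_infinite (fun k : ℕ => h^[k] v₀)
    rcases hij.lt_or_gt with hlt | hlt
    · refine ⟨h^[i] v₀, j - i, by omega, ?_,
        fun k => by rw [← Function.iterate_add_apply]; exact hv₀ _⟩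
      rw [← Function.iterate_add_apply, Nat.sub_add_cancel hlt.le]
      exact hmap.symm
    · refine ⟨h^[j] v₀, i - j, by omega, ?_,
        fun k => by rw [← Function.iterate_add_apply]; exact hv₀ _⟩
      rw [← Function.iterate_add_apply, Nat.sub_add_cancel hlt.le]
      exact hmap
  set C : Finset V := (Finset.range m).image (fun k => h^[k] y) with hC
  have hyC : y ∈ C := Finset.mem_image.2 ⟨0, Finset.mem_range.2 hm, rfl⟩
  have hCr : ∀ z ∈ C, z ≠ r := by
    intro z hz
    obtain ⟨k, _, rfl⟩ := Finset.mem_image.1 hz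
    exact hyr k
  have hmaps : ∀ z ∈ C, h z ∈ C := by
    intro z hz
    obtain ⟨k, hk, rfl⟩ := Finset.mem_image.1 hz
    rw [show h (h^[k] y) = h^[k + 1] y from (Function.iterate_succ_apply' h k y).symm]
    rcases eq_or_lt_of_le (Nat.succ_le_of_lt (Finset.mem_range.1 hk)) with heq | hlt
    · rw [show k + 1 = m from heq, hym]; exact hyC
    · exact Finset.mem_image.2 ⟨k + 1, Finset.mem_range.2 hlt, rfl⟩
  have himg : C.image h = C := by
    apply Finset.Subset.antisymm
    · intro z hz
      obtain ⟨x, hx, rfl⟩ := Finset.mem_image.1 hz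
      exact hmaps x hx
    · intro z hz
      obtain ⟨k, hk, rfl⟩ := Finset.mem_image.1 hz
      have hkm : k < m := Finset.mem_range.1 hk
      rcases Nat.eq_zero_or_pos k with rfl | hkpos
      · refine Finset.mem_image.2 ⟨h^[m - 1] y,
          Finset.mem_image.2 ⟨m - 1, Finset.mem_range.2 (by omega), rfl⟩, ?_⟩
        rw [show h (h^[m - 1] y) = h^[m - 1 + 1] y from
          (Function.iterate_succ_apply' h (m - 1) y).symm, show m - 1 + 1 = m by omega, hym]
        exact (Function.iterate_zero_apply h y).symm
      · exact Finset.mem_image.2 ⟨h^[k - 1] y,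
          Finset.mem_image.2 ⟨k - 1, Finset.mem_range.2 (by omega), rfl⟩,
          by rw [show h (h^[k - 1] y) = h^[k - 1 + 1] y from
            (Function.iterate_succ_apply' h (k - 1) y).symm, show k - 1 + 1 = k by omega]⟩
  have hinj : Set.InjOn h C := Finset.injOn_of_card_image_eq (by rw [himg])
  rw [← Matrix.exists_vecMul_eq_zero_iff]
  refine ⟨fun v => if v ∈ C then (1 : ℤ) else 0, ?_, ?_⟩
  · intro hzero
    have := congrFun hzero y
    rw [if_pos hyC] at this
    simp at this
  · funext u
    rw [Matrix.vecMul, dotProduct, Pi.zero_apply]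
    have : ∀ v ∈ Finset.univ (α := V),
        (if v ∈ C then (1:ℤ) else 0) * Nmat G r p v u
        = if v ∈ C then Nmat G r p v u else 0 := by
      intro v _
      by_cases hv : v ∈ C <;> simp [hv]
    rw [Finset.sum_congr rfl this, Finset.sum_ite_mem, Finset.univ_inter]
    by_cases hur : u = r
    · rw [hur]
      apply Finset.sum_eq_zero
      intro v hv
      rw [Nmat_apply_ne G r p hval (hCr v hv), if_pos rfl]
    · have expand : ∀ v ∈ C, Nmat G r p v u
          = (if u = v then (1:ℤ) else 0) - (if u = h v then 1 else 0) := by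
        intro v hv
        rw [Nmat_apply_ne G r p hval (hCr v hv), if_neg hur]
      rw [Finset.sum_congr rfl expand, Finset.sum_sub_distrib]
      have first : ∑ v ∈ C, (if u = v then (1:ℤ) else 0)
          = if u ∈ C then 1 else 0 := by
        rw [Finset.sum_ite_eq]
      have second : ∑ v ∈ C, (if u = h v then (1:ℤ) else 0)
          = if u ∈ C then 1 else 0 := by
        by_cases hu : u ∈ C
        · obtain ⟨v₁, hv₁, hv₁u⟩ := Finset.mem_image.1 (himg ▸ hu)
          have : ∀ v ∈ C, (if u = h v then (1:ℤ) else 0)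
              = if v = v₁ then 1 else 0 := by
            intro v hv
            by_cases hvv : v = v₁
            · rw [if_pos hvv, hvv, hv₁u, if_pos rfl]
            · rw [if_neg hvv, if_neg]
              intro hc
              exact hvv (hinj hv hv₁ (hv₁u.symm ▸ hc.symm))
          rw [Finset.sum_congr rfl this, Finset.sum_ite_eq', if_pos hv₁, if_pos hu]
        · rw [if_neg hu]
          apply Finset.sum_eq_zero
          intro v hv
          rw [if_neg]
          intro hc
          exact hu (hc ▸ hmaps v hv)
      rw [first, second, sub_self]

lemma det_D_eq_sum (G : Multidigraph V E) (w : E → ℤ) (r : V) (e₀ : E) :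
    (((Bmat G w).updateRow r (Pi.single r 1)).updateCol r (Pi.single r 1)).det
    = ∑ p ∈ Fintype.piFinset (fun v : V => if v = r then ({e₀} : Finset E) else Finset.univ),
        (∏ v, (if v = r then 1 else coef G w v (p v))) * (Nmat G r p).det := by
  classical
  set A : V → Finset E := fun v => if v = r then ({e₀} : Finset E) else Finset.univ with hA
  set g : V → E → (V → ℤ) :=
    fun v e => if v = r then Pi.single r (1:ℤ) else coef G w v e • inc' G r e with hg
  have hD : ((Bmat G w).updateRow r (Pi.single r 1)).updateCol r (Pi.single r 1)
      = Matrix.of (fun v => ∑ e ∈ A v, g v e) := by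
    ext v u
    by_cases hv : v = r
    · rw [hv]
      have hrow : ∀ u', (((Bmat G w).updateRow r (Pi.single r 1)).updateCol r
          (Pi.single r 1)) r u' = (Pi.single r 1 : V → ℤ) u' := by
        intro u'
        rw [Matrix.updateCol_apply]
        by_cases hu : u' = r
        · rw [if_pos hu, hu]
        · rw [if_neg hu, Matrix.updateRow_self]
      rw [hrow u, Matrix.of_apply, Finset.sum_apply]
      simp only [hg, hA, if_pos rfl, Finset.sum_singleton]
    · rw [Matrix.of_apply, Finset.sum_apply]
      simp only [hg, hA, if_neg hv]
      rw [Matrix.updateCol_apply, Matrix.updateRow_ne hv]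
      by_cases hu : u = r
      · rw [if_pos hu]
        rw [Pi.single_eq_of_ne hv]
        symm
        apply Finset.sum_eq_zero
        intro e _
        rw [Pi.smul_apply, inc', hu, if_pos rfl, smul_zero]
      · rw [if_neg hu]
        rw [show (Bmat G w) v u = ∑ e : E, coef G w v e * inc G e u from rfl]
        apply Finset.sum_congr rfl
        intro e _
        rw [Pi.smul_apply, inc', if_neg hu, smul_eq_mul]
  rw [hD]
  have expand := (Matrix.detRowAlternating (n := V) (R := ℤ)).toMultilinearMap.map_sum_finset g A
  have hdet : ∀ gg : V → (V → ℤ), (Matrix.of gg).det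
      = (Matrix.detRowAlternating (n := V) (R := ℤ)).toMultilinearMap gg := fun _ => rfl
  rw [hdet, expand]
  apply Finset.sum_congr rfl
  intro p _
  have hfun : (fun v => g v (p v)) = fun v =>
      (if v = r then (1:ℤ) else coef G w v (p v)) •
        (if v = r then (Pi.single r 1 : V → ℤ) else inc' G r (p v)) := by
    funext v
    by_cases hv : v = r <;> simp [hg, hv]
  rw [hfun, MultilinearMap.map_smul_univ]
  rw [smul_eq_mul]
  congr 1

open Classical in
lemma term_eq (G : Multidigraph V E) (w : E → ℤ) (r : V) (p : V → E) :
    (∏ v, (if v = r then 1 else coef G w v (p v))) * (Nmat G r p).det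
    = if Valid G r p ∧ Acyc G r p then ∏ v ∈ Finset.univ.erase r, w (p v) else 0 := by
  classical
  by_cases hval : Valid G r p
  · by_cases hacyc : Acyc G r p
    · rw [if_pos ⟨hval, hacyc⟩, det_Nmat_acyc G r p hval hacyc, mul_one]
      rw [← Finset.mul_prod_erase Finset.univ _ (Finset.mem_univ r)]
      rw [if_pos rfl, one_mul]
      apply Finset.prod_congr rfl
      intro v hv
      have hvr : v ≠ r := (Finset.mem_erase.1 hv).1
      rw [if_neg hvr, coef, if_pos (hval v hvr)]
    · rw [if_neg (fun hc => hacyc hc.2), det_Nmat_cyc G r p hval hacyc, mul_zero]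
  · rw [if_neg (fun hc => hval hc.1)]
    rw [Valid] at hval
    push_neg at hval
    obtain ⟨v, hvr, hv⟩ := hval
    have hz : (if v = r then (1:ℤ) else coef G w v (p v)) = 0 := by
      rw [if_neg hvr, coef, if_neg hv]
    rw [Finset.prod_eq_zero (Finset.mem_univ v) hz, zero_mul]

lemma chain'_pred_of_mem_tail {α : Type} {R : α → α → Prop} :
    ∀ {l : List α} {a e : α}, (a :: l).Chain' R → e ∈ l → ∃ d ∈ a :: l, R d e := by
  intro l
  induction l with
  | nil => intro a e _ he; exact absurd he List.not_mem_nil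
  | cons b t ih =>
    intro a e hch he
    unfold List.Chain' at hch
    rw [List.isChain_cons_cons] at hch
    rcases List.mem_cons.1 he with rfl | he'
    · exact ⟨a, List.mem_cons_self, hch.1⟩
    · obtain ⟨d, hd, hde⟩ := ih hch.2 he'
      exact ⟨d, List.mem_cons_of_mem a hd, hde⟩

lemma chain_pred {l : List E} (G : Multidigraph V E)
    (hch : l.Chain' (fun e f => G.tgt e = G.src f))
    (hwrap : ∀ e₁ ∈ l.head?, ∀ e₂ ∈ l.getLast?, G.tgt e₂ = G.src e₁) :
    ∀ e ∈ l, ∃ d ∈ l, G.tgt d = G.src e := by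
  intro e he
  match l, he with
  | a :: t, he =>
    rcases List.mem_cons.1 he with rfl | he'
    · refine ⟨(e :: t).getLast (List.cons_ne_nil e t), List.getLast_mem _, ?_⟩
      apply hwrap
      · rw [List.head?_cons, Option.mem_some_iff]
      · rw [List.getLast?_eq_getLast (List.cons_ne_nil e t), Option.mem_some_iff]
    · exact chain'_pred_of_mem_tail hch he'

lemma acyc_of_no_cycle (G : Multidigraph V E) (r : V) (p : V → E) (hval : Valid G r p)
    (hnc : ¬ ∃ l : List E, l ≠ [] ∧ (∀ e ∈ l, ∃ v, v ≠ r ∧ e = p v) ∧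
      l.Chain' (fun e f => G.tgt e = G.src f) ∧
      (∀ e₁ ∈ l.head?, ∀ e₂ ∈ l.getLast?, G.tgt e₂ = G.src e₁)) :
    Acyc G r p := by
  classical
  by_contra hnac
  apply hnc
  rw [Acyc] at hnac
  push_neg at hnac
  obtain ⟨v₀, hv₀⟩ := hnac
  set h : V → V := hstep G r p with hh
  obtain ⟨y, m, hm, hym, hyr⟩ : ∃ (y : V) (m : ℕ), 0 < m ∧ h^[m] y = y ∧
      ∀ k, h^[k] y ≠ r := by
    obtain ⟨i, j, hij, hmap⟩ :=
      Finite.exists_ne_map_eq_of_infinite (fun k : ℕ => h^[k] v₀)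
    rcases hij.lt_or_gt with hlt | hlt
    · refine ⟨h^[i] v₀, j - i, by omega, ?_,
        fun k => by rw [← Function.iterate_add_apply]; exact hv₀ _⟩
      rw [← Function.iterate_add_apply, Nat.sub_add_cancel hlt.le]
      exact hmap.symm
    · refine ⟨h^[j] v₀, i - j, by omega, ?_,
        fun k => by rw [← Function.iterate_add_apply]; exact hv₀ _⟩
      rw [← Function.iterate_add_apply, Nat.sub_add_cancel hlt.le]
      exact hmap
  have hsrc : ∀ k, G.src (p (h^[k] y)) = h^[k + 1] y := by
    intro k
    rw [Function.iterate_succ_apply']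
    rw [hh, hstep]
    rw [if_neg (hyr k)]
  have htgt : ∀ k, G.tgt (p (h^[k] y)) = h^[k] y := fun k => hval _ (hyr k)
  obtain ⟨n, rfl⟩ := Nat.exists_eq_succ_of_ne_zero (Nat.pos_iff_ne_zero.1 hm)
  refine ⟨(List.range (n + 1)).map (fun jj => p (h^[n - jj] y)), ?_, ?_, ?_, ?_⟩
  · simp
  · intro e he
    obtain ⟨jj, _, rfl⟩ := List.mem_map.1 he
    exact ⟨h^[n - jj] y, hyr _, rfl⟩
  · unfold List.Chain'
    rw [List.isChain_map, List.isChain_range_succ]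
    intro jj hjj
    rw [htgt, hsrc]
    congr 1
    omega
  · intro e₁ he₁ e₂ he₂
    have hh1 : e₁ = p (h^[n] y) := by
      rw [List.range_succ_eq_map, List.map_cons, List.head?_cons, Option.mem_some_iff] at he₁
      rw [← he₁, Nat.sub_zero]
    have hh2 : e₂ = p (h^[0] y) := by
      rw [List.range_succ, List.map_append, List.map_singleton, List.getLast?_concat, Option.mem_some_iff] at he₂
      rw [← he₂, Nat.sub_self]
    rw [hh1, hh2, htgt, hsrc, show n + 1 = n.succ from rfl, hym]
    rfl

lemma no_cycle_of_acyc (G : Multidigraph V E) (r : V) (p : V → E) (hval : Valid G r p)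
    (hacyc : Acyc G r p) :
    ¬ ∃ l : List E, l ≠ [] ∧ (∀ e ∈ l, ∃ v, v ≠ r ∧ e = p v) ∧
      l.Chain' (fun e f => G.tgt e = G.src f) ∧
      (∀ e₁ ∈ l.head?, ∀ e₂ ∈ l.getLast?, G.tgt e₂ = G.src e₁) := by
  rintro ⟨l, hne, hmem, hch, hwrap⟩
  have key : ∀ e ∈ l, G.tgt e ≠ r ∧ p (G.tgt e) = e := by
    intro e he
    obtain ⟨v, hv, rfl⟩ := hmem e he
    rw [hval v hv]
    exact ⟨hv, rfl⟩
  have step : ∀ x, (∃ e ∈ l, G.tgt e = x) → (∃ e ∈ l, G.tgt e = hstep G r p x) := by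
    rintro x ⟨e, he, rfl⟩
    have hx : hstep G r p (G.tgt e) = G.src e := by
      rw [hstep, if_neg (key e he).1, (key e he).2]
    obtain ⟨d, hd, hde⟩ := chain_pred G hch hwrap e he
    exact ⟨d, hd, by rw [hx, hde]⟩
  obtain ⟨e1, he1⟩ := List.exists_mem_of_ne_nil l hne
  have iter : ∀ k, ∃ e ∈ l, G.tgt e = (hstep G r p)^[k] (G.tgt e1) := by
    intro k
    induction k with
    | zero => exact ⟨e1, he1, rfl⟩
    | succ n ih =>
      rw [Function.iterate_succ_apply']
      exact step _ ih
  obtain ⟨k, hk⟩ := hacyc (G.tgt e1)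
  obtain ⟨e, he, hte⟩ := iter k
  exact (key e he).1 (hte.trans hk)

variable [DecidableEq E]

noncomputable def treeFun (G : Multidigraph V E) (r : V) (e₀ : E) (T : Finset E) :
    V → E := fun v =>
  if hv : (T.filter (fun e => G.tgt e = v)).card = 1
  then (Finset.card_eq_one.mp hv).choose else e₀

lemma image_filter_tgt (G : Multidigraph V E) (r : V) (p : V → E) (hval : Valid G r p)
    {v : V} (hv : v ≠ r) :
    ((Finset.univ.erase r).image p).filter (fun e => G.tgt e = v) = {p v} := by
  ext e
  simp only [Finset.mem_filter, Finset.mem_image, Finset.mem_erase, Finset.mem_singleton,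
    Finset.mem_univ, and_true]
  constructor
  · rintro ⟨⟨u, hu, rfl⟩, htgt⟩
    rw [hval u hu] at htgt
    rw [htgt]
  · rintro rfl
    exact ⟨⟨v, hv, rfl⟩, hval v hv⟩

lemma isOST_image (G : Multidigraph V E) (r : V) (p : V → E)
    (hval : Valid G r p) (hacyc : Acyc G r p) :
    IsOrientedSpanningTree G r ((Finset.univ.erase r).image p) := by
  refine ⟨?_, ?_, ?_⟩
  · intro v hv
    rw [image_filter_tgt G r p hval hv, Finset.card_singleton]
  · rw [Finset.card_eq_zero, Finset.filter_eq_empty_iff]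
    intro e he
    obtain ⟨u, hu, rfl⟩ := Finset.mem_image.1 he
    have hur : u ≠ r := (Finset.mem_erase.1 hu).1
    rw [hval u hur]
    exact hur
  · rintro ⟨l, hne, hmem, hch, hwrap⟩
    refine no_cycle_of_acyc G r p hval hacyc ⟨l, hne, ?_, hch, hwrap⟩
    intro e he
    obtain ⟨u, hu, heq⟩ := Finset.mem_image.1 (hmem e he)
    exact ⟨u, (Finset.mem_erase.1 hu).1, heq.symm⟩

lemma treeFun_filter (G : Multidigraph V E) (r : V) (e₀ : E) {T : Finset E}
    (hT : IsOrientedSpanningTree G r T) {v : V} (hv : v ≠ r) :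
    T.filter (fun e => G.tgt e = v) = {treeFun G r e₀ T v} := by
  have h1 := hT.1 v hv
  rw [treeFun, dif_pos h1]
  exact (Finset.card_eq_one.mp h1).choose_spec

lemma treeFun_mem (G : Multidigraph V E) (r : V) (e₀ : E) {T : Finset E}
    (hT : IsOrientedSpanningTree G r T) {v : V} (hv : v ≠ r) :
    treeFun G r e₀ T v ∈ T ∧ G.tgt (treeFun G r e₀ T v) = v := by
  have := treeFun_filter G r e₀ hT hv
  have hmem : treeFun G r e₀ T v ∈ T.filter (fun e => G.tgt e = v) := by
    rw [this]
    exact Finset.mem_singleton_self _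
  exact ⟨(Finset.mem_filter.1 hmem).1, (Finset.mem_filter.1 hmem).2⟩

lemma treeFun_root (G : Multidigraph V E) (r : V) (e₀ : E) {T : Finset E}
    (hT : IsOrientedSpanningTree G r T) : treeFun G r e₀ T r = e₀ := by
  rw [treeFun, dif_neg]
  rw [hT.2.1]
  omega

lemma mem_tgt_ne (G : Multidigraph V E) (r : V) {T : Finset E}
    (hT : IsOrientedSpanningTree G r T) {e : E} (he : e ∈ T) : G.tgt e ≠ r := by
  intro hc
  have : e ∈ T.filter (fun e => G.tgt e = r) := Finset.mem_filter.2 ⟨he, hc⟩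
  rw [Finset.card_eq_zero.1 hT.2.1] at this
  exact absurd this (Finset.notMem_empty e)

lemma treeFun_of_mem (G : Multidigraph V E) (r : V) (e₀ : E) {T : Finset E}
    (hT : IsOrientedSpanningTree G r T) {e : E} (he : e ∈ T) :
    treeFun G r e₀ T (G.tgt e) = e := by
  have hfil := treeFun_filter G r e₀ hT (mem_tgt_ne G r hT he)
  have : e ∈ T.filter (fun e' => G.tgt e' = G.tgt e) := Finset.mem_filter.2 ⟨he, rfl⟩
  rw [hfil, Finset.mem_singleton] at this
  exact this.symm

lemma treeFun_image (G : Multidigraph V E) (r : V) (e₀ : E) {T : Finset E}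
    (hT : IsOrientedSpanningTree G r T) :
    (Finset.univ.erase r).image (treeFun G r e₀ T) = T := by
  apply Finset.Subset.antisymm
  · intro e he
    obtain ⟨u, hu, rfl⟩ := Finset.mem_image.1 he
    exact (treeFun_mem G r e₀ hT (Finset.mem_erase.1 hu).1).1
  · intro e he
    refine Finset.mem_image.2 ⟨G.tgt e, ?_, treeFun_of_mem G r e₀ hT he⟩
    exact Finset.mem_erase.2 ⟨mem_tgt_ne G r hT he, Finset.mem_univ _⟩

lemma treeFun_valid (G : Multidigraph V E) (r : V) (e₀ : E) {T : Finset E}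
    (hT : IsOrientedSpanningTree G r T) : Valid G r (treeFun G r e₀ T) :=
  fun v hv => (treeFun_mem G r e₀ hT hv).2

lemma treeFun_acyc (G : Multidigraph V E) (r : V) (e₀ : E) {T : Finset E}
    (hT : IsOrientedSpanningTree G r T) : Acyc G r (treeFun G r e₀ T) := by
  apply acyc_of_no_cycle G r _ (treeFun_valid G r e₀ hT)
  rintro ⟨l, hne, hmem, hch, hwrap⟩
  apply hT.2.2
  refine ⟨l, hne, ?_, hch, hwrap⟩
  intro e he
  obtain ⟨v, hv, rfl⟩ := hmem e he
  exact (treeFun_mem G r e₀ hT hv).1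

open Classical in
lemma sum_eq_treeCount (G : Multidigraph V E) (w : E → ℤ) (r : V) (e₀ : E) :
    (∑ p ∈ Fintype.piFinset (fun v : V => if v = r then ({e₀} : Finset E) else Finset.univ),
      if Valid G r p ∧ Acyc G r p then ∏ v ∈ Finset.univ.erase r, w (p v) else 0)
    = treeCount G w r := by
  classical
  rw [← Finset.sum_filter, treeCount, ← Finset.sum_filter]
  refine Finset.sum_bij' (fun p _ => (Finset.univ.erase r).image p)
    (fun T _ => treeFun G r e₀ T) ?_ ?_ ?_ ?_ ?_
  · intro p hp
    obtain ⟨-, hval, hacyc⟩ := Finset.mem_filter.1 hp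
    exact Finset.mem_filter.2 ⟨Finset.mem_univ _, isOST_image G r p hval hacyc⟩
  · intro T hT
    have hOST : IsOrientedSpanningTree G r T := (Finset.mem_filter.1 hT).2
    refine Finset.mem_filter.2 ⟨Fintype.mem_piFinset.2 ?_,
      treeFun_valid G r e₀ hOST, treeFun_acyc G r e₀ hOST⟩
    intro v
    beta_reduce
    by_cases hv : v = r
    · rw [if_pos hv, hv, treeFun_root G r e₀ hOST]
      exact Finset.mem_singleton_self _
    · rw [if_neg hv]
      exact Finset.mem_univ _
  · intro p hp
    obtain ⟨hpi, hval, hacyc⟩ := Finset.mem_filter.1 hp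
    have hOST := isOST_image G r p hval hacyc
    show treeFun G r e₀ ((Finset.univ.erase r).image p) = p
    funext v
    by_cases hv : v = r
    · rw [hv, treeFun_root G r e₀ hOST]
      have := Fintype.mem_piFinset.1 hpi r
      rw [if_pos rfl, Finset.mem_singleton] at this
      exact this.symm
    · have h1 := treeFun_filter G r e₀ hOST hv
      have h2 := image_filter_tgt G r p hval hv
      rw [h2] at h1
      exact (Finset.singleton_inj.1 h1).symm
  · intro T hT
    show (Finset.univ.erase r).image (treeFun G r e₀ T) = T
    exact treeFun_image G r e₀ ((Finset.mem_filter.1 hT).2)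
  · intro p hp
    obtain ⟨-, hval, -⟩ := Finset.mem_filter.1 hp
    refine (Finset.prod_image ?_).symm
    intro x hx y hy hxy
    rw [← hval x (Finset.mem_erase.1 hx).1, ← hval y (Finset.mem_erase.1 hy).1, hxy]

open Classical in
lemma treeCount_eq_det (G : Multidigraph V E) (w : E → ℤ) (r : V) (e₀ : E) :
    treeCount G w r
    = (((Bmat G w).updateRow r (Pi.single r 1)).updateCol r (Pi.single r 1)).det := by
  classical
  rw [det_D_eq_sum G w r e₀,
    Finset.sum_congr rfl (fun p _ => term_eq G w r p)]
  exact (sum_eq_treeCount G w r e₀).symm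

end RootInd

/-- For a finite connected directed multigraph with a balanced weight, the weighted
number of oriented spanning trees is independent of the choice of root. -/
theorem treeCount_root_independent {V E : Type} [Fintype V] [Fintype E] [DecidableEq V]
    (G : Multidigraph V E) (w : E → ℤ)
    (hconn : MConnected G) (hbal : IsBalanced G w)
    (v₁ v₂ : V) :
    treeCount G w v₁ = treeCount G w v₂ := by
  classical
  rcases eq_or_ne v₁ v₂ with rfl | hne
  · rfl
  haveI : Nonempty V := ⟨v₁⟩
  cases isEmpty_or_nonempty E with
  | inl hE =>
    have hzero : ∀ r v : V, v ≠ r → treeCount G w r = 0 := by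
      intro r v hv
      rw [treeCount]
      apply Finset.sum_eq_zero
      intro T _
      rw [if_neg]
      intro hT
      have h1 := hT.1 v hv
      rw [Finset.eq_empty_of_isEmpty (T.filter (fun e => G.tgt e = v)),
        Finset.card_empty] at h1
      exact absurd h1 (by omega)
    rw [hzero v₁ v₂ hne.symm, hzero v₂ v₁ hne]
  | inr hE =>
    obtain ⟨e₀⟩ := hE
    rw [RootInd.treeCount_eq_det G w v₁ e₀, RootInd.treeCount_eq_det G w v₂ e₀]
    exact RootInd.principal_cofactor_eq (RootInd.Bmat G w)
      (RootInd.Bmat_rowsum G w) (RootInd.Bmat_colsum G w hbal) v₁ v₂
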